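/- Let F = (F_1,…,F_r) be an r-tuple of formal power series in R[[x_1,…,x_r]] and let Φ = (Φ_1,…,Φ_r) be the unique r-tuple of elements of A satisfying Φ_m = F_m(X + SΦ) for all m. Define two r-tuples of elements of A: A_i := x_i − Σ_{j=1}^r s_{ij}·F_j(X) and B_i := x_i + Σ_{j=1}^r s_{ij}·Φ_j. Then A and B are formally inverse to each other in the x-variables: substituting (B_1,…,B_r) for (x_1,…,x_r) in A_i (leaving the s-variables fixed) yields x_i for every i, and substituting (A_1,…,A_r) for (x_1,…,x_r) in B_i yields x_i for every i. -/

import Mathlib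

/-- Index type for the variables `s_{ij}`, `1 ≤ i ≤ j ≤ r`. -/
def SVar (r : ℕ) := {p : Fin r × Fin r // p.1 ≤ p.2}

instance {r : ℕ} : DecidableEq (SVar r) :=
  inferInstanceAs (DecidableEq {p : Fin r × Fin r // p.1 ≤ p.2})

instance {r : ℕ} : Fintype (SVar r) :=
  inferInstanceAs (Fintype {p : Fin r × Fin r // p.1 ≤ p.2})

/-- The index of the variable `s_{ij} = s_{ji}` for arbitrary `i j`. -/
def sIdx {r : ℕ} (i j : Fin r) : SVar r :=
  if h : i ≤ j then ⟨(i, j), h⟩ else ⟨(j, i), (not_le.mp h).le⟩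

/-- Formal partial derivative `∂f/∂x_i` of a multivariate formal power series:
the coefficient of `∂f/∂x_i` at a monomial `m` is `(m i + 1) · (coeff of f at m + {i})`. -/
noncomputable def pd {σ : Type*} (R : Type*) [CommSemiring R]
    (i : σ) (f : MvPowerSeries σ R) : MvPowerSeries σ R :=
  fun m => (((m i) + 1 : ℕ) : R) * MvPowerSeries.coeff (R := R) (m + Finsupp.single i 1) f

/-- Substitution of `s_{ij} = 0` for all `i ≤ j`: restriction to the `x`-variables. -/
noncomputable def resS0 {r : ℕ} {R : Type*} [CommSemiring R]
    (f : MvPowerSeries (Fin r ⊕ SVar r) R) : MvPowerSeries (Fin r) R :=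
  fun m => MvPowerSeries.coeff (R := R) (Finsupp.mapDomain Sum.inl m) f

/-- Total degree of a monomial. -/
def mdeg {σ : Type*} (m : σ →₀ ℕ) : ℕ := m.sum fun _ e => e

/-- Formal substitution `F(G) = Σ_m (coeff_m F) · ∏_i G_i^{m_i}`, for tuples `G` whose
components have zero constant coefficient, computed coefficientwise: since
`∏ G_i^{m_i}` has order `≥ |m|`, only multi-indices `m` with `|m| ≤ deg μ` (in
particular `m ≤ (deg μ, …, deg μ)`) contribute to the coefficient at `μ`. -/
noncomputable def substT {σ τ R : Type*} [Fintype σ] [DecidableEq σ] [CommRing R]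
    (F : MvPowerSeries σ R) (G : σ → MvPowerSeries τ R) : MvPowerSeries τ R :=
  fun μ => MvPowerSeries.coeff (R := R) μ
    (∑ m ∈ Finset.Iic (Finsupp.equivFunOnFinite.symm (fun _ : σ => mdeg μ)),
      MvPowerSeries.coeff (R := R) m F • ∏ i, (G i) ^ (m i))

/-- The tuple `A_i := x_i − Σ_j s_{ij}·F_j(X)`, with `F_j(X)` viewed in `A` via the
canonical substitution `x_p ↦ x_p`. -/
noncomputable def mapAt {r : ℕ} {R : Type*} [CommRing R]
    (F : Fin r → MvPowerSeries (Fin r) R) (i : Fin r) :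
    MvPowerSeries (Fin r ⊕ SVar r) R :=
  MvPowerSeries.X (Sum.inl i) -
    ∑ j, MvPowerSeries.X (Sum.inr (sIdx i j)) *
      substT (F j) (fun p => (MvPowerSeries.X (Sum.inl p) : MvPowerSeries (Fin r ⊕ SVar r) R))

/-- The tuple `B_i := x_i + Σ_j s_{ij}·Φ_j`. -/
noncomputable def mapBt {r : ℕ} {R : Type*} [CommRing R]
    (Φ : Fin r → MvPowerSeries (Fin r ⊕ SVar r) R) (i : Fin r) :
    MvPowerSeries (Fin r ⊕ SVar r) R :=
  MvPowerSeries.X (Sum.inl i) +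
    ∑ j, MvPowerSeries.X (Sum.inr (sIdx i j)) * Φ j

namespace Stmt6Aux
open MvPowerSeries Finsupp

variable {σ τ R : Type*} [CommRing R]

lemma mdeg_add (a b : σ →₀ ℕ) : mdeg (a + b) = mdeg a + mdeg b := by
  unfold mdeg; exact Finsupp.sum_add_index' (fun _ => rfl) (fun _ _ _ => rfl)

lemma mdeg_eq_zero {μ : σ →₀ ℕ} (h : mdeg μ = 0) : μ = 0 := by
  ext i
  simp only [Finsupp.coe_zero, Pi.zero_apply]
  by_contra hi
  have hmem : i ∈ μ.support := Finsupp.mem_support_iff.mpr (by simpa using hi)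
  have : μ i ≤ mdeg μ := Finset.single_le_sum (f := fun j => μ j) (fun _ _ => Nat.zero_le _) hmem
  omega

lemma mdeg_fintype [Fintype σ] (m : σ →₀ ℕ) : mdeg m = ∑ i, m i :=
  Finsupp.sum_fintype _ _ (fun _ => rfl)

/-- `f` has order at least `k`. -/
def OrdGe (k : ℕ) (f : MvPowerSeries σ R) : Prop :=
  ∀ μ : σ →₀ ℕ, mdeg μ < k → MvPowerSeries.coeff (R := R) μ f = 0

lemma ordGe_of_constantCoeff {f : MvPowerSeries σ R}
    (h : MvPowerSeries.constantCoeff (σ := σ) (R := R) f = 0) : OrdGe 1 f := by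
  intro μ hμ
  have : μ = 0 := mdeg_eq_zero (by omega)
  subst this; exact h

lemma OrdGe.mul [DecidableEq σ] {k l : ℕ} {f g : MvPowerSeries σ R}
    (hf : OrdGe k f) (hg : OrdGe l g) : OrdGe (k + l) (f * g) := by
  intro μ hμ
  rw [MvPowerSeries.coeff_mul]
  apply Finset.sum_eq_zero
  intro p hp
  have hsum : p.1 + p.2 = μ := Finset.HasAntidiagonal.mem_antidiagonal.mp hp
  have h2 : mdeg p.1 + mdeg p.2 < k + l := by rw [← mdeg_add, hsum]; exact hμ
  rcases lt_or_ge (mdeg p.1) k with h | h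
  · rw [hf _ h, zero_mul]
  · rw [hg _ (by omega), mul_zero]

lemma ordGe_prod [DecidableEq σ] {ι : Type*} (s : Finset ι) (G : ι → MvPowerSeries σ R)
    (m : ι → ℕ) (hG : ∀ i, OrdGe 1 (G i)) :
    OrdGe (∑ i ∈ s, m i) (∏ i ∈ s, G i ^ m i) := by
  classical
  induction s using Finset.induction with
  | empty => intro μ h; simp at h
  | insert a t hx ih =>
    rw [Finset.sum_insert hx, Finset.prod_insert hx]
    have hpow : OrdGe (m a) (G a ^ m a) := by
      induction m a with
      | zero => intro μ h; simp at h
      | succ n ihn =>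
        rw [pow_succ]
        exact (show OrdGe (n + 1) _ from ihn.mul (hG a))
    exact hpow.mul ih


/-- Constant bound monomial. -/
noncomputable def cbound (σ : Type*) [Fintype σ] (N : ℕ) : σ →₀ ℕ :=
  Finsupp.equivFunOnFinite.symm fun _ => N

@[simp] lemma cbound_apply [Fintype σ] (N : ℕ) (i : σ) : cbound σ N i = N := rfl

lemma le_cbound [Fintype σ] {N : ℕ} {m : σ →₀ ℕ} : m ≤ cbound σ N ↔ ∀ i, m i ≤ N := by
  constructor
  · intro h i; exact (Finsupp.le_def.mp h i)
  · intro h; exact Finsupp.le_def.mpr fun i => h i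

lemma mdeg_le_of_le_cbound [Fintype σ] {N : ℕ} {m : σ →₀ ℕ} (h : m ≤ cbound σ N) :
    mdeg m ≤ N * Fintype.card σ := by
  rw [mdeg_fintype]
  calc ∑ i, m i ≤ ∑ _i : σ, N := Finset.sum_le_sum fun i _ => le_cbound.mp h i
  _ = N * Fintype.card σ := by rw [Finset.sum_const, smul_eq_mul, mul_comm, Fintype.card]

/-- Base coefficient formula for `substT`, with the built-in truncation bound. -/
lemma coeff_substT_self [Fintype σ] [DecidableEq σ] (F : MvPowerSeries σ R)
    (G : σ → MvPowerSeries τ R) (μ : τ →₀ ℕ) :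
    MvPowerSeries.coeff (R := R) μ (substT F G) =
      ∑ m ∈ Finset.Iic (cbound σ (mdeg μ)),
        MvPowerSeries.coeff (R := R) m F * MvPowerSeries.coeff (R := R) μ (∏ i, (G i) ^ (m i)) := by
  have : MvPowerSeries.coeff (R := R) μ (substT F G) = MvPowerSeries.coeff (R := R) μ
      (∑ m ∈ Finset.Iic (cbound σ (mdeg μ)),
        MvPowerSeries.coeff (R := R) m F • ∏ i, (G i) ^ (m i)) := rfl
  rw [this, map_sum]
  exact Finset.sum_congr rfl fun m _ => by rw [LinearMap.map_smul, smul_eq_mul]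

/-- Coefficient formula with any sufficiently large truncation bound. -/
lemma coeff_substT [Fintype σ] [DecidableEq σ] {F : MvPowerSeries σ R}
    {G : σ → MvPowerSeries τ R} (hG : ∀ i, MvPowerSeries.constantCoeff (σ := τ) (R := R) (G i) = 0)
    (μ : τ →₀ ℕ) {N : ℕ} (hN : mdeg μ ≤ N) :
    MvPowerSeries.coeff (R := R) μ (substT F G) =
      ∑ m ∈ Finset.Iic (cbound σ N),
        MvPowerSeries.coeff (R := R) m F * MvPowerSeries.coeff (R := R) μ (∏ i, (G i) ^ (m i)) := by
  classical
  rw [coeff_substT_self]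
  apply Finset.sum_subset
  · intro m hm
    rw [Finset.mem_Iic] at *
    exact le_trans hm (le_cbound.mpr fun i => by simpa using hN)
  · intro m _ hnot
    rw [Finset.mem_Iic] at hnot
    obtain ⟨i, hi⟩ : ∃ i, ¬ m i ≤ mdeg μ := by
      by_contra h; push_neg at h; exact hnot (le_cbound.mpr h)
    have hz : MvPowerSeries.coeff (R := R) μ (∏ i, (G i) ^ (m i)) = 0 := by
      apply ordGe_prod Finset.univ G m (fun i => ordGe_of_constantCoeff (hG i))
      calc mdeg μ < m i := by omega
      _ ≤ ∑ j, m j := Finset.single_le_sum (fun _ _ => Nat.zero_le _) (Finset.mem_univ i)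
    rw [hz, mul_zero]

lemma coeff_prod_pow_eq_zero [Fintype σ] [DecidableEq τ] {G : σ → MvPowerSeries τ R}
    (hG : ∀ i, MvPowerSeries.constantCoeff (σ := τ) (R := R) (G i) = 0) {μ : τ →₀ ℕ} {m : σ →₀ ℕ}
    (h : ¬ m ≤ cbound σ (mdeg μ)) :
    MvPowerSeries.coeff (R := R) μ (∏ i, (G i) ^ (m i)) = 0 := by
  obtain ⟨i, hi⟩ : ∃ i, ¬ m i ≤ mdeg μ := by
    by_contra hc; push_neg at hc; exact h (le_cbound.mpr hc)
  apply ordGe_prod Finset.univ G m (fun i => ordGe_of_constantCoeff (hG i))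
  calc mdeg μ < m i := by omega
  _ ≤ ∑ j, m j := Finset.single_le_sum (fun _ _ => Nat.zero_le _) (Finset.mem_univ i)

variable [Fintype σ] [DecidableEq σ]

lemma substT_zero (G : σ → MvPowerSeries τ R) : substT (0 : MvPowerSeries σ R) G = 0 := by
  apply MvPowerSeries.ext; intro μ
  rw [coeff_substT_self, map_zero]
  exact Finset.sum_eq_zero fun m _ => by rw [map_zero, zero_mul]

lemma substT_add (F F' : MvPowerSeries σ R) (G : σ → MvPowerSeries τ R) :
    substT (F + F') G = substT F G + substT F' G := by
  apply MvPowerSeries.ext; intro μ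
  rw [map_add, coeff_substT_self, coeff_substT_self, coeff_substT_self,
    ← Finset.sum_add_distrib]
  exact Finset.sum_congr rfl fun m _ => by rw [map_add, add_mul]

lemma substT_neg (F : MvPowerSeries σ R) (G : σ → MvPowerSeries τ R) :
    substT (-F) G = -(substT F G) := by
  apply MvPowerSeries.ext; intro μ
  rw [map_neg, coeff_substT_self, coeff_substT_self, ← Finset.sum_neg_distrib]
  exact Finset.sum_congr rfl fun m _ => by rw [map_neg, neg_mul]

lemma substT_sub (F F' : MvPowerSeries σ R) (G : σ → MvPowerSeries τ R) :
    substT (F - F') G = substT F G - substT F' G := by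
  rw [sub_eq_add_neg, substT_add, substT_neg, sub_eq_add_neg]

lemma substT_sum {ι : Type*} (s : Finset ι) (f : ι → MvPowerSeries σ R)
    (G : σ → MvPowerSeries τ R) :
    substT (∑ j ∈ s, f j) G = ∑ j ∈ s, substT (f j) G := by
  classical
  induction s using Finset.induction with
  | empty => simpa using substT_zero G
  | insert a t hx ih =>
    rw [Finset.sum_insert hx, Finset.sum_insert hx, substT_add, ih]

lemma substT_C (a : R) (G : σ → MvPowerSeries τ R) :
    substT (MvPowerSeries.C (σ := σ) (R := R) a) G = MvPowerSeries.C (σ := τ) (R := R) a := by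
  classical
  apply MvPowerSeries.ext; intro μ
  rw [coeff_substT_self]
  rw [Finset.sum_eq_single (0 : σ →₀ ℕ)]
  · have h1 : (∏ i, (G i) ^ ((0 : σ →₀ ℕ) i)) = 1 := by simp
    rw [h1]
    simp [MvPowerSeries.coeff_C, MvPowerSeries.coeff_one, mul_ite]
  · intro m _ hm
    rw [MvPowerSeries.coeff_C, if_neg hm, zero_mul]
  · intro h
    exact absurd (Finset.mem_Iic.mpr zero_le) h

lemma substT_one (G : σ → MvPowerSeries τ R) :
    substT (1 : MvPowerSeries σ R) G = 1 := by
  have := substT_C (1 : R) G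
  simpa using this

lemma substT_X {G : σ → MvPowerSeries τ R}
    (hG : ∀ i, MvPowerSeries.constantCoeff (σ := τ) (R := R) (G i) = 0) (i : σ) :
    substT (MvPowerSeries.X i) G = G i := by
  classical
  apply MvPowerSeries.ext; intro μ
  rw [coeff_substT hG μ (Nat.le_succ (mdeg μ))]
  rw [Finset.sum_eq_single (Finsupp.single i 1)]
  · have h1 : (∏ j, (G j) ^ ((Finsupp.single i 1) j)) = G i := by
      rw [Finset.prod_eq_single i]
      · simp
      · intro j _ hj
        rw [Finsupp.single_apply, if_neg (Ne.symm hj), pow_zero]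
      · intro h; exact absurd (Finset.mem_univ i) h
    rw [h1, MvPowerSeries.coeff_X, if_pos rfl, one_mul]
  · intro m _ hm
    rw [MvPowerSeries.coeff_X, if_neg hm, zero_mul]
  · intro h
    apply absurd _ h
    rw [Finset.mem_Iic]
    apply le_cbound.mpr
    intro j
    rw [Finsupp.single_apply]
    split <;> omega

lemma constantCoeff_substT {G : σ → MvPowerSeries τ R} (F : MvPowerSeries σ R) :
    MvPowerSeries.constantCoeff (σ := τ) (R := R) (substT F G) = MvPowerSeries.constantCoeff (σ := σ) (R := R) F := by
  classical
  rw [← MvPowerSeries.coeff_zero_eq_constantCoeff, ← MvPowerSeries.coeff_zero_eq_constantCoeff,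
    coeff_substT_self]
  rw [Finset.sum_eq_single (0 : σ →₀ ℕ)]
  · have h1 : (∏ i, (G i) ^ ((0 : σ →₀ ℕ) i)) = 1 := by simp
    rw [h1]
    simp
  · intro m hm hne
    exfalso
    apply hne
    rw [Finset.mem_Iic] at hm
    ext j
    have := Finsupp.le_def.mp hm j
    simp only [cbound_apply] at this
    simp only [Finsupp.coe_zero, Pi.zero_apply]
    unfold mdeg at this
    simp at this ⊢
    omega
  · intro h
    exact absurd (Finset.mem_Iic.mpr zero_le) h

lemma prod_pow_add [DecidableEq τ] (G : σ → MvPowerSeries τ R) (a b : σ →₀ ℕ) :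
    (∏ i, (G i) ^ ((a + b) i)) = (∏ i, (G i) ^ (a i)) * (∏ i, (G i) ^ (b i)) := by
  rw [← Finset.prod_mul_distrib]
  exact Finset.prod_congr rfl fun i _ => by rw [Finsupp.add_apply, pow_add]

lemma substT_mul [DecidableEq τ] {G : σ → MvPowerSeries τ R}
    (hG : ∀ i, MvPowerSeries.constantCoeff (σ := τ) (R := R) (G i) = 0) (F F' : MvPowerSeries σ R) :
    substT (F * F') G = substT F G * substT F' G := by
  classical
  apply MvPowerSeries.ext; intro μ
  set N := mdeg μ with hN
  set I := Finset.Iic (cbound σ N) with hI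
  set S : (σ →₀ ℕ) × (σ →₀ ℕ) → R := fun p =>
    MvPowerSeries.coeff (R := R) p.1 F * MvPowerSeries.coeff (R := R) p.2 F' *
      MvPowerSeries.coeff (R := R) μ (∏ i, (G i) ^ ((p.1 + p.2) i)) with hS
  have hRHS : MvPowerSeries.coeff (R := R) μ (substT F G * substT F' G) = ∑ p ∈ I ×ˢ I, S p := by
    rw [MvPowerSeries.coeff_mul]
    have hterm : ∀ p ∈ Finset.HasAntidiagonal.antidiagonal μ,
        MvPowerSeries.coeff (R := R) p.1 (substT F G) * MvPowerSeries.coeff (R := R) p.2 (substT F' G) =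
        ∑ a ∈ I, ∑ b ∈ I, MvPowerSeries.coeff (R := R) a F * MvPowerSeries.coeff (R := R) b F' *
          (MvPowerSeries.coeff (R := R) p.1 (∏ i, (G i) ^ (a i)) *
           MvPowerSeries.coeff (R := R) p.2 (∏ i, (G i) ^ (b i))) := by
      intro p hp
      have hpsum : p.1 + p.2 = μ := Finset.HasAntidiagonal.mem_antidiagonal.mp hp
      have h1 : mdeg p.1 ≤ N := by
        have := mdeg_add p.1 p.2; rw [hpsum] at this; omega
      have h2 : mdeg p.2 ≤ N := by
        have := mdeg_add p.1 p.2; rw [hpsum] at this; omega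
      rw [coeff_substT hG p.1 h1, coeff_substT hG p.2 h2, Finset.sum_mul_sum]
      exact Finset.sum_congr rfl fun a _ => Finset.sum_congr rfl fun b _ => by ring
    rw [Finset.sum_congr rfl hterm, Finset.sum_comm]
    rw [Finset.sum_product]
    refine Finset.sum_congr rfl fun a _ => ?_
    rw [Finset.sum_comm]
    refine Finset.sum_congr rfl fun b _ => ?_
    rw [← Finset.mul_sum, ← MvPowerSeries.coeff_mul, ← prod_pow_add]
  have hdisj : Set.PairwiseDisjoint (↑I : Set (σ →₀ ℕ)) Finset.HasAntidiagonal.antidiagonal := by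
    intro x _ y _ hxy
    refine Finset.disjoint_left.mpr fun p hpx hpy => hxy ?_
    rw [← Finset.HasAntidiagonal.mem_antidiagonal.mp hpx, Finset.HasAntidiagonal.mem_antidiagonal.mp hpy]
  have hLHS : MvPowerSeries.coeff (R := R) μ (substT (F * F') G) =
      ∑ p ∈ I.biUnion Finset.HasAntidiagonal.antidiagonal, S p := by
    rw [coeff_substT hG μ (le_refl N)]
    have hterm : ∀ m ∈ I, MvPowerSeries.coeff (R := R) m (F * F') *
        MvPowerSeries.coeff (R := R) μ (∏ i, (G i) ^ (m i)) = ∑ p ∈ Finset.HasAntidiagonal.antidiagonal m, S p := by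
      intro m _
      rw [MvPowerSeries.coeff_mul, Finset.sum_mul]
      refine Finset.sum_congr rfl fun p hp => ?_
      have hpm : p.1 + p.2 = m := Finset.HasAntidiagonal.mem_antidiagonal.mp hp
      simp only [hS]
      rw [hpm]
    rw [Finset.sum_congr rfl hterm, ← Finset.sum_biUnion hdisj]
  rw [hLHS, hRHS]
  apply Finset.sum_subset
  · intro p hp
    rw [Finset.mem_biUnion] at hp
    obtain ⟨m, hm, hpm⟩ := hp
    have heq : p.1 + p.2 = m := Finset.HasAntidiagonal.mem_antidiagonal.mp hpm
    have hmI := Finset.mem_Iic.mp hm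
    have hle1 : p.1 ≤ p.1 + p.2 := Finsupp.le_def.mpr fun i => by rw [Finsupp.add_apply]; omega
    have hle2 : p.2 ≤ p.1 + p.2 := Finsupp.le_def.mpr fun i => by rw [Finsupp.add_apply]; omega
    rw [heq] at hle1 hle2
    exact Finset.mem_product.mpr ⟨Finset.mem_Iic.mpr (le_trans hle1 hmI),
      Finset.mem_Iic.mpr (le_trans hle2 hmI)⟩
  · intro p _ hnot
    have hnle : ¬ (p.1 + p.2) ≤ cbound σ N := fun hle => hnot (Finset.mem_biUnion.mpr
      ⟨p.1 + p.2, Finset.mem_Iic.mpr hle, Finset.HasAntidiagonal.mem_antidiagonal.mpr rfl⟩)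
    simp only [hS]
    rw [coeff_prod_pow_eq_zero hG hnle, mul_zero]

lemma substT_pow [DecidableEq τ] {G : σ → MvPowerSeries τ R}
    (hG : ∀ i, MvPowerSeries.constantCoeff (σ := τ) (R := R) (G i) = 0) (F : MvPowerSeries σ R) (n : ℕ) :
    substT (F ^ n) G = (substT F G) ^ n := by
  induction n with
  | zero => simpa using substT_one G
  | succ k ih => rw [pow_succ, pow_succ, substT_mul hG, ih]

lemma substT_prod [DecidableEq τ] {G : σ → MvPowerSeries τ R}
    (hG : ∀ i, MvPowerSeries.constantCoeff (σ := τ) (R := R) (G i) = 0) {ι : Type*} (s : Finset ι)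
    (f : ι → MvPowerSeries σ R) :
    substT (∏ j ∈ s, f j) G = ∏ j ∈ s, substT (f j) G := by
  classical
  induction s using Finset.induction with
  | empty => simpa using substT_one G
  | insert a t hx ih =>
    rw [Finset.prod_insert hx, Finset.prod_insert hx, substT_mul hG, ih]

/-- Composition of substitutions. -/
lemma substT_substT {σ' : Type*} [Fintype σ'] [DecidableEq σ'] [DecidableEq τ]
    (F : MvPowerSeries σ R) {H : σ → MvPowerSeries σ' R} {G : σ' → MvPowerSeries τ R}
    (hH : ∀ i, MvPowerSeries.constantCoeff (σ := σ') (R := R) (H i) = 0)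
    (hG : ∀ j, MvPowerSeries.constantCoeff (σ := τ) (R := R) (G j) = 0) :
    substT (substT F H) G = substT F (fun i => substT (H i) G) := by
  classical
  apply MvPowerSeries.ext; intro μ
  set N := mdeg μ with hNdef
  set N' := N + N * Fintype.card σ' with hN'def
  have hL : ∀ i, MvPowerSeries.constantCoeff (σ := τ) (R := R) (substT (H i) G) = 0 := by
    intro i; rw [constantCoeff_substT]; exact hH i
  rw [coeff_substT hG μ (le_refl N), coeff_substT hL μ (by omega : mdeg μ ≤ N')]
  have hterm : ∀ m ∈ Finset.Iic (cbound σ' N),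
      MvPowerSeries.coeff (R := R) m (substT F H) * MvPowerSeries.coeff (R := R) μ (∏ i, (G i) ^ (m i)) =
      ∑ k ∈ Finset.Iic (cbound σ N'), MvPowerSeries.coeff (R := R) k F *
        (MvPowerSeries.coeff (R := R) m (∏ i, (H i) ^ (k i)) *
         MvPowerSeries.coeff (R := R) μ (∏ i, (G i) ^ (m i))) := by
    intro m hm
    have hmd : mdeg m ≤ N' := by
      have := mdeg_le_of_le_cbound (Finset.mem_Iic.mp hm); omega
    rw [coeff_substT hH m hmd, Finset.sum_mul]
    exact Finset.sum_congr rfl fun k _ => by ring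
  rw [Finset.sum_congr rfl hterm, Finset.sum_comm]
  refine Finset.sum_congr rfl fun k _ => ?_
  rw [← Finset.mul_sum]
  congr 1
  have : ∑ m ∈ Finset.Iic (cbound σ' N), MvPowerSeries.coeff (R := R) m (∏ i, (H i) ^ (k i)) *
      MvPowerSeries.coeff (R := R) μ (∏ i, (G i) ^ (m i)) =
      MvPowerSeries.coeff (R := R) μ (substT (∏ i, (H i) ^ (k i)) G) :=
    (coeff_substT hG μ (le_refl N)).symm
  rw [this, substT_prod hG, Finset.prod_congr rfl (fun i _ => substT_pow hG (H i) (k i))]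


section Eqv

variable {α β : Type*} [Fintype β]

/-- Total degree in the `β`-variables. -/
noncomputable def sdeg (μ : (α ⊕ β) →₀ ℕ) : ℕ := ∑ v, μ (Sum.inr v)

lemma sdeg_add (μ ν : (α ⊕ β) →₀ ℕ) : sdeg (μ + ν) = sdeg μ + sdeg ν := by
  unfold sdeg
  rw [← Finset.sum_add_distrib]
  exact Finset.sum_congr rfl fun v _ => Finsupp.add_apply _ _ _

lemma sdeg_single_inr [DecidableEq α] [DecidableEq β] (v : β) :
    sdeg (Finsupp.single (Sum.inr v : α ⊕ β) 1) = 1 := by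
  unfold sdeg
  rw [Finset.sum_eq_single v]
  · simp
  · intro w _ hw
    rw [Finsupp.single_apply, if_neg (by simp [hw.symm]), ]
  · intro h; exact absurd (Finset.mem_univ v) h

/-- Congruence modulo `β`-degree `≥ n`. -/
def Eqv (n : ℕ) (f g : MvPowerSeries (α ⊕ β) R) : Prop :=
  ∀ μ : (α ⊕ β) →₀ ℕ, sdeg μ < n → MvPowerSeries.coeff (R := R) μ f = MvPowerSeries.coeff (R := R) μ g

lemma Eqv.refl (n : ℕ) (f : MvPowerSeries (α ⊕ β) R) : Eqv n f f := fun _ _ => rfl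

lemma Eqv.add {n : ℕ} {f g f' g' : MvPowerSeries (α ⊕ β) R}
    (h : Eqv n f g) (h' : Eqv n f' g') : Eqv n (f + f') (g + g') := by
  intro μ hμ
  rw [map_add, map_add, h μ hμ, h' μ hμ]

lemma Eqv.sum {n : ℕ} {ι : Type*} {s : Finset ι} {f g : ι → MvPowerSeries (α ⊕ β) R}
    (h : ∀ j ∈ s, Eqv n (f j) (g j)) : Eqv n (∑ j ∈ s, f j) (∑ j ∈ s, g j) := by
  intro μ hμ
  rw [map_sum, map_sum]
  exact Finset.sum_congr rfl fun j hj => h j hj μ hμ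

lemma Eqv.mul [DecidableEq α] [DecidableEq β] {n : ℕ} {f g f' g' : MvPowerSeries (α ⊕ β) R}
    (h : Eqv n f g) (h' : Eqv n f' g') : Eqv n (f * f') (g * g') := by
  intro μ hμ
  rw [MvPowerSeries.coeff_mul, MvPowerSeries.coeff_mul]
  refine Finset.sum_congr rfl fun p hp => ?_
  have hpsum : p.1 + p.2 = μ := Finset.HasAntidiagonal.mem_antidiagonal.mp hp
  have hs : sdeg p.1 + sdeg p.2 = sdeg μ := by rw [← sdeg_add, hpsum]
  rw [h p.1 (by omega), h' p.2 (by omega)]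

lemma Eqv.pow [DecidableEq α] [DecidableEq β] {n : ℕ} {f g : MvPowerSeries (α ⊕ β) R}
    (h : Eqv n f g) (k : ℕ) : Eqv n (f ^ k) (g ^ k) := by
  induction k with
  | zero => simpa using Eqv.refl n 1
  | succ m ih => rw [pow_succ, pow_succ]; exact ih.mul h

lemma Eqv.prod [DecidableEq α] [DecidableEq β] {n : ℕ} {ι : Type*} {s : Finset ι}
    {f g : ι → MvPowerSeries (α ⊕ β) R} (h : ∀ j ∈ s, Eqv n (f j) (g j)) :
    Eqv n (∏ j ∈ s, f j) (∏ j ∈ s, g j) := by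
  classical
  induction s using Finset.induction with
  | empty => simpa using Eqv.refl n 1
  | insert a t hx ih =>
    rw [Finset.prod_insert hx, Finset.prod_insert hx]
    exact (h a (Finset.mem_insert_self a t)).mul
      (ih fun j hj => h j (Finset.mem_insert_of_mem hj))

lemma Eqv.X_mul [DecidableEq α] [DecidableEq β] {n : ℕ} {f g : MvPowerSeries (α ⊕ β) R}
    (v : β) (h : Eqv n f g) :
    Eqv (n + 1) (MvPowerSeries.X (Sum.inr v) * f) (MvPowerSeries.X (Sum.inr v) * g) := by
  intro μ hμ
  rw [MvPowerSeries.coeff_mul, MvPowerSeries.coeff_mul]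
  refine Finset.sum_congr rfl fun p hp => ?_
  have hpsum : p.1 + p.2 = μ := Finset.HasAntidiagonal.mem_antidiagonal.mp hp
  by_cases hX : p.1 = Finsupp.single (Sum.inr v) 1
  · have hs : sdeg p.1 + sdeg p.2 = sdeg μ := by rw [← sdeg_add, hpsum]
    have h1 : sdeg p.1 = 1 := by rw [hX]; exact sdeg_single_inr v
    rw [h p.2 (by omega)]
  · rw [MvPowerSeries.coeff_X, if_neg hX, zero_mul, zero_mul]

lemma Eqv.substT [DecidableEq α] [DecidableEq β] {n : ℕ}
    (F : MvPowerSeries σ R) {K K' : σ → MvPowerSeries (α ⊕ β) R}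
    (h : ∀ p, Eqv n (K p) (K' p)) : Eqv n (substT F K) (substT F K') := by
  intro μ hμ
  rw [coeff_substT_self, coeff_substT_self]
  refine Finset.sum_congr rfl fun m _ => ?_
  congr 1
  exact Eqv.prod (fun i _ => (h i).pow (m i)) μ hμ

end Eqv

lemma constantCoeff_X_mul' {σ : Type*} [DecidableEq σ] (v : σ) (f : MvPowerSeries σ R) :
    MvPowerSeries.constantCoeff (σ := σ) (R := R) (MvPowerSeries.X v * f) = 0 := by
  rw [← MvPowerSeries.coeff_zero_eq_constantCoeff, MvPowerSeries.coeff_mul]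
  apply Finset.sum_eq_zero
  intro p hp
  have h0 : p.1 + p.2 = 0 := Finset.HasAntidiagonal.mem_antidiagonal.mp hp
  have h1 : p.1 = 0 := by
    ext i
    have := DFunLike.congr_fun h0 i
    simp only [Finsupp.add_apply, Finsupp.coe_zero, Pi.zero_apply] at this ⊢
    omega
  rw [h1, MvPowerSeries.coeff_X,
    if_neg (fun hc => one_ne_zero (Finsupp.single_eq_zero.mp hc.symm)), zero_mul]

end Stmt6Aux

/-- If `Φ` satisfies `Φ_m = F_m(X + SΦ)`, then the maps
`A_i = x_i − Σ_j s_{ij}F_j(X)` and `B_i = x_i + Σ_j s_{ij}Φ_j` are formally inverse to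
each other in the `x`-variables (the `s`-variables being fixed). -/
theorem stmt6 {r : ℕ} (hr : 1 ≤ r) (R : Type*) [CommRing R] [Algebra ℚ R]
    (F : Fin r → MvPowerSeries (Fin r) R)
    (Φ : Fin r → MvPowerSeries (Fin r ⊕ SVar r) R)
    (hΦ : ∀ m, Φ m = substT (F m) (mapBt Φ)) :
    (∀ i, substT (mapAt F i)
        (Sum.elim (mapBt Φ) (fun v => MvPowerSeries.X (Sum.inr v))) =
      MvPowerSeries.X (Sum.inl i)) ∧
    (∀ i, substT (mapBt Φ i)
        (Sum.elim (mapAt F) (fun v => MvPowerSeries.X (Sum.inr v))) =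
      MvPowerSeries.X (Sum.inl i)) := by
  classical
  open Stmt6Aux MvPowerSeries in
  clear hr
  set B' : (Fin r ⊕ SVar r) → MvPowerSeries (Fin r ⊕ SVar r) R :=
    Sum.elim (mapBt Φ) (fun v => MvPowerSeries.X (Sum.inr v)) with hB'def
  set A' : (Fin r ⊕ SVar r) → MvPowerSeries (Fin r ⊕ SVar r) R :=
    Sum.elim (mapAt F) (fun v => MvPowerSeries.X (Sum.inr v)) with hA'def
  have hB' : ∀ v, MvPowerSeries.constantCoeff (R := R) (B' v) = 0 := by
    intro v
    cases v with
    | inl i =>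
      show MvPowerSeries.constantCoeff (R := R) (mapBt Φ i) = 0
      unfold mapBt
      rw [map_add, map_sum, MvPowerSeries.constantCoeff_X]
      simp [constantCoeff_X_mul']
    | inr v => exact MvPowerSeries.constantCoeff_X _
  have hA' : ∀ v, MvPowerSeries.constantCoeff (R := R) (A' v) = 0 := by
    intro v
    cases v with
    | inl i =>
      show MvPowerSeries.constantCoeff (R := R) (mapAt F i) = 0
      unfold mapAt
      rw [map_sub, map_sum, MvPowerSeries.constantCoeff_X]
      simp [constantCoeff_X_mul']
    | inr v => exact MvPowerSeries.constantCoeff_X _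
  have hXinl : ∀ p : Fin r, MvPowerSeries.constantCoeff (R := R)
      (MvPowerSeries.X (Sum.inl p) : MvPowerSeries (Fin r ⊕ SVar r) R) = 0 :=
    fun p => MvPowerSeries.constantCoeff_X _
  set θ : Fin r → MvPowerSeries (Fin r ⊕ SVar r) R :=
    fun j => substT (F j) (fun p => MvPowerSeries.X (Sum.inl p)) with hθdef
  set ψ : Fin r → MvPowerSeries (Fin r ⊕ SVar r) R :=
    fun j => substT (Φ j) A' with hψdef
  have hBinl : (fun p => substT (MvPowerSeries.X (Sum.inl p) :
      MvPowerSeries (Fin r ⊕ SVar r) R) B') = mapBt Φ := by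
    funext p
    rw [substT_X hB' (Sum.inl p), hB'def]
    simp
  have part1 : ∀ i, substT (mapAt F i) B' = MvPowerSeries.X (Sum.inl i) := by
    intro i
    unfold mapAt
    rw [substT_sub, substT_X hB' (Sum.inl i), substT_sum]
    have hj : ∀ j : Fin r, substT (MvPowerSeries.X (Sum.inr (sIdx i j)) *
        substT (F j) (fun p => (MvPowerSeries.X (Sum.inl p) :
          MvPowerSeries (Fin r ⊕ SVar r) R))) B' =
        MvPowerSeries.X (Sum.inr (sIdx i j)) * Φ j := by
      intro j
      rw [substT_mul hB', substT_X hB' (Sum.inr (sIdx i j)),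
        substT_substT (F j) hXinl hB']
      congr 1
      rw [hBinl, ← hΦ j]
    rw [Finset.sum_congr rfl (fun j _ => hj j)]
    show mapBt Φ i - _ = _
    unfold mapBt
    ring
  have hmapBt0 : ∀ p, MvPowerSeries.constantCoeff (R := R) (mapBt Φ p) = 0 :=
    fun p => hB' (Sum.inl p)
  have hmapBtA : ∀ p, substT (mapBt Φ p) A' =
      mapAt F p + ∑ q, MvPowerSeries.X (Sum.inr (sIdx p q)) * ψ q := by
    intro p
    unfold mapBt
    rw [substT_add, substT_X hA' (Sum.inl p), substT_sum]
    congr 1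
    refine Finset.sum_congr rfl fun q _ => ?_
    rw [substT_mul hA', substT_X hA' (Sum.inr (sIdx p q))]
    rw [hψdef, hA'def]
    simp
  have hψeq : ∀ j, ψ j = substT (F j)
      (fun p => mapAt F p + ∑ q, MvPowerSeries.X (Sum.inr (sIdx p q)) * ψ q) := by
    intro j
    have h1 : ψ j = substT (substT (F j) (mapBt Φ)) A' := by
      rw [hψdef]
      show substT (Φ j) A' = _
      rw [hΦ j]
    rw [h1, substT_substT (F j) hmapBt0 hA']
    exact congrArg _ (funext hmapBtA)
  have hθeq : ∀ j, θ j = substT (F j)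
      (fun p => mapAt F p + ∑ q, MvPowerSeries.X (Sum.inr (sIdx p q)) * θ q) := by
    intro j
    have harg : (fun p => mapAt F p +
        ∑ q, MvPowerSeries.X (Sum.inr (sIdx p q)) * θ q) =
        fun p => (MvPowerSeries.X (Sum.inl p) : MvPowerSeries (Fin r ⊕ SVar r) R) := by
      funext p
      unfold mapAt
      ring
    rw [harg]
  have hind : ∀ n, ∀ j, Eqv n (ψ j) (θ j) := by
    intro n
    induction n with
    | zero => intro j μ hμ; omega
    | succ m ih =>
      intro j
      rw [hψeq j, hθeq j]
      apply Eqv.substT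
      intro p
      exact (Eqv.refl _ _).add (Eqv.sum fun q _ => Eqv.X_mul _ (ih q))
  have hψθ : ∀ j, ψ j = θ j := by
    intro j
    apply MvPowerSeries.ext
    intro μ
    exact hind (sdeg μ + 1) j μ (Nat.lt_succ_self _)
  have part2 : ∀ i, substT (mapBt Φ i) A' = MvPowerSeries.X (Sum.inl i) := by
    intro i
    rw [hmapBtA i, Finset.sum_congr rfl (fun q _ => by rw [hψθ q])]
    unfold mapAt
    ring
  exact ⟨part1, part2⟩
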